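/- Let G be a finite Blaschke product, let K ⊆ 𝔻 be compact, and let a ∈ 𝔻 \ K be a point lying in the connected component of closure(𝔻) \ K that contains the unit circle. Then for every b ∈ 𝔻 with G(b) = a, the point b lies in the connected component of closure(𝔻) \ { z ∈ 𝔻 : G(z) ∈ K } that contains the unit circle. (That is, if K does not separate a from ∂𝔻 in the closed disk, then G⁻¹(K) does not separate any preimage of a from ∂𝔻.) -/

import Mathlib

open Metric Set

/-- The complement of the open unit ball in `ℂ` is preconnected. -/
lemma outside_preconnected : IsPreconnected {z : ℂ | 1 ≤ ‖z‖} := by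
  have hrank : (1 : Cardinal) < Module.rank ℝ ℂ := by
    rw [Complex.rank_real_complex]; exact Cardinal.one_lt_two
  have hs : IsPreconnected ((sphere (0:ℂ) 1) ×ˢ (Ici (1:ℝ))) :=
    (isPreconnected_sphere hrank 0 1).prod isPreconnected_Ici
  have himg := hs.image (fun p : ℂ × ℝ => p.2 • p.1)
    ((continuous_snd.smul continuous_fst).continuousOn)
  have heq : (fun p : ℂ × ℝ => p.2 • p.1) '' ((sphere (0:ℂ) 1) ×ˢ (Ici (1:ℝ)))
      = {z : ℂ | 1 ≤ ‖z‖} := by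
    ext z
    constructor
    · rintro ⟨⟨w, t⟩, ⟨hw, ht⟩, rfl⟩
      simp only [mem_sphere_iff_norm, sub_zero] at hw
      simp only [mem_Ici] at ht
      simp only [mem_setOf_eq, norm_smul, hw, mul_one, Real.norm_eq_abs]
      rw [abs_of_nonneg (le_trans zero_le_one ht)]
      exact ht
    · intro hz
      simp only [mem_setOf_eq] at hz
      have hz0 : z ≠ 0 := by
        intro h; rw [h, norm_zero] at hz; linarith
      have hn0 : ‖z‖ ≠ 0 := norm_ne_zero_iff.mpr hz0
      refine ⟨(‖z‖⁻¹ • z, ‖z‖), ⟨?_, hz⟩, ?_⟩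
      · simp only [mem_sphere_iff_norm, sub_zero, norm_smul, Real.norm_eq_abs,
          abs_of_nonneg (inv_nonneg.mpr (norm_nonneg z))]
        exact inv_mul_cancel₀ hn0
      · simp only [smul_smul, mul_inv_cancel₀ hn0, one_smul]
  rwa [heq] at himg

/-- `G` agrees on the closed unit disk with a finite Blaschke product
`λ · ∏ᵢ (z - aᵢ)/(1 - conj(aᵢ) z)` with `d ≥ 1`, `|λ| = 1`, `|aᵢ| < 1`. -/
def IsFiniteBlaschke (G : ℂ → ℂ) : Prop :=
  ∃ (d : ℕ) (lam : ℂ) (a : Fin d → ℂ),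
    1 ≤ d ∧ ‖lam‖ = 1 ∧ (∀ i, ‖a i‖ < 1) ∧
    ∀ z ∈ Metric.closedBall (0:ℂ) 1,
      G z = lam * ∏ i, (z - a i) / (1 - (starRingEnd ℂ) (a i) * z)


/-- if a compact `K ⊆ 𝔻` does not separate `a ∈ 𝔻 \ K` from the unit
circle in the closed disk (i.e. `a` lies in the connected component of `closure 𝔻 \ K`
containing the circle, the component of the point `1`), then `G⁻¹(K)` does not separate
any `G`-preimage of `a` from the unit circle. -/
theorem stmt_9 (G : ℂ → ℂ) (hG : IsFiniteBlaschke G)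
    (K : Set ℂ) (hK : IsCompact K) (hKD : K ⊆ Metric.ball (0:ℂ) 1)
    (a : ℂ) (ha : a ∈ Metric.ball (0:ℂ) 1 \ K)
    (hacomp : a ∈ connectedComponentIn (Metric.closedBall (0:ℂ) 1 \ K) 1) :
    ∀ b ∈ Metric.ball (0:ℂ) 1, G b = a →
      b ∈ connectedComponentIn
        (Metric.closedBall (0:ℂ) 1 \ {z ∈ Metric.ball (0:ℂ) 1 | G z ∈ K}) 1 := by
  obtain ⟨d, lam, aa, hd, hlam, haa, hGB⟩ := hG
  intro b hb hGb
  set B : ℂ → ℂ := fun z => lam * ∏ i, (z - aa i) / (1 - (starRingEnd ℂ) (aa i) * z) with hBdef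
  have hGBeq : ∀ z ∈ closedBall (0:ℂ) 1, G z = B z := hGB
  -- analyticity of B on the open unit ball
  have hBa : AnalyticOnNhd ℂ B (ball (0:ℂ) 1) := by
    intro z hz
    refine analyticAt_const.mul (Finset.analyticAt_fun_prod _ fun i _ => ?_)
    refine (analyticAt_id.sub analyticAt_const).div
      (analyticAt_const.sub (analyticAt_const.mul analyticAt_id)) ?_
    intro h0
    have h1 : (1:ℂ) = (starRingEnd ℂ) (aa i) * z := sub_eq_zero.mp h0
    have h2 : (1:ℝ) ≤ ‖(starRingEnd ℂ) (aa i) * z‖ := by rw [← h1]; simp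
    rw [norm_mul, RCLike.norm_conj] at h2
    have h4 : ‖aa i‖ < 1 := by exact haa i
    have h5 : ‖z‖ < 1 := mem_ball_zero_iff.mp hz
    nlinarith [norm_nonneg (aa i), norm_nonneg z]
  have hBb : B b = a := by rw [← hGb]; exact (hGBeq b (ball_subset_closedBall hb)).symm
  have h1K : (1:ℂ) ∉ ball (0:ℂ) 1 := by simp
  have h1nK : (1:ℂ) ∉ K := fun h => h1K (hKD h)
  -- a path from 1 to a avoiding K
  have haQ : a ∈ connectedComponentIn Kᶜ 1 :=
    connectedComponentIn_mono 1 (fun z hz => hz.2) hacomp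
  have hQopen : IsOpen (connectedComponentIn Kᶜ 1) :=
    hK.isClosed.isOpen_compl.connectedComponentIn
  have hQconn : IsConnected (connectedComponentIn Kᶜ 1) :=
    isConnected_connectedComponentIn_iff.mpr h1nK
  have hQpath : IsPathConnected (connectedComponentIn Kᶜ 1) :=
    hQopen.isConnected_iff_isPathConnected.mp hQconn
  obtain ⟨γ, hγ⟩ := hQpath.joinedIn 1 (mem_connectedComponentIn h1nK) a haQ
  set Γ : Set ℂ := range γ with hΓdef
  have hΓcomp : IsCompact Γ := isCompact_range γ.continuous
  have hΓconn : IsPreconnected Γ := isPreconnected_range γ.continuous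
  have h1Γ : (1:ℂ) ∈ Γ := ⟨0, γ.source⟩
  have haΓ : a ∈ Γ := ⟨1, γ.target⟩
  have hΓK : ∀ z ∈ Γ, z ∉ K := by
    rintro z ⟨t, rfl⟩ hzK
    exact (connectedComponentIn_subset _ _ (hγ t)) hzK
  -- thickened compact K'
  obtain ⟨δ₁, hδ₁pos, hδ₁⟩ := hK.exists_thickening_subset_open isOpen_ball hKD
  obtain ⟨δ₂, hδ₂pos, hδ₂⟩ := hK.exists_thickening_subset_open
    hΓcomp.isClosed.isOpen_compl (fun z hz hzΓ => hΓK z hzΓ hz)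
  set δ := min δ₁ δ₂ with hδdef
  have hδpos : 0 < δ := lt_min hδ₁pos hδ₂pos
  set K' := Metric.cthickening (δ/2) K with hK'def
  have hK'closed : IsClosed K' := Metric.isClosed_cthickening
  have hK'thick : K' ⊆ Metric.thickening δ K :=
    Metric.cthickening_subset_thickening' hδpos (by linarith) K
  have hK'ball : K' ⊆ ball (0:ℂ) 1 :=
    hK'thick.trans ((Metric.thickening_mono (min_le_left _ _) K).trans hδ₁)
  have hK'Γ : K' ⊆ Γᶜ :=
    hK'thick.trans ((Metric.thickening_mono (min_le_right _ _) K).trans hδ₂)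
  have hKint : K ⊆ interior K' := fun z hz =>
    interior_maximal (Metric.thickening_subset_cthickening (δ/2) K)
      Metric.isOpen_thickening (Metric.self_subset_thickening (half_pos hδpos) K hz)
  have h1K' : (1:ℂ) ∈ K'ᶜ := fun h => h1K (hK'ball h)
  -- the component U of 1 in the complement of K'
  set U := connectedComponentIn K'ᶜ 1 with hUdef
  have hUopen : IsOpen U := hK'closed.isOpen_compl.connectedComponentIn
  have hUconn : IsPreconnected U := isPreconnected_connectedComponentIn
  have hΓU : Γ ⊆ U :=
    hΓconn.subset_connectedComponentIn h1Γ (fun z hzΓ hzK' => hK'Γ hzK' hzΓ)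
  have haU : a ∈ U := hΓU haΓ
  have hUK' : U ⊆ K'ᶜ := connectedComponentIn_subset _ _
  have houtU : {z : ℂ | 1 ≤ ‖z‖} ⊆ U := by
    refine outside_preconnected.subset_connectedComponentIn (by simp) ?_
    intro z hz hzK'
    have := mem_ball_zero_iff.mp (hK'ball hzK')
    exact absurd hz (not_le.mpr this)
  -- the component V of b in the preimage of U
  set T := ball (0:ℂ) 1 ∩ B ⁻¹' U with hTdef
  have hBc : ContinuousOn B (ball (0:ℂ) 1) :=
    fun z hz => (hBa z hz).continuousAt.continuousWithinAt
  have hTopen : IsOpen T := hBc.isOpen_inter_preimage isOpen_ball hUopen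
  have hbT : b ∈ T := ⟨hb, by rw [mem_preimage, hBb]; exact haU⟩
  set V := connectedComponentIn T b with hVdef
  have hVopen : IsOpen V := hTopen.connectedComponentIn
  have hVT : V ⊆ T := connectedComponentIn_subset _ _
  have hbV : b ∈ V := mem_connectedComponentIn hbT
  have hVconn : IsPreconnected V := isPreconnected_connectedComponentIn
  have hVball : V ⊆ ball (0:ℂ) 1 := fun z hz => (hVT hz).1
  have hclVcb : closure V ⊆ closedBall (0:ℂ) 1 := by
    rw [← closure_ball (0:ℂ) one_ne_zero]; exact closure_mono hVball
  -- boundary points of V in the open ball do not map into U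
  have hbd : ∀ z ∈ closure V, z ∉ V → z ∈ ball (0:ℂ) 1 → B z ∉ U := by
    intro z hzc hzV hzb hzU
    have hzT : z ∈ T := ⟨hzb, hzU⟩
    have hzopen : connectedComponentIn T z ∈ nhds z :=
      hTopen.connectedComponentIn.mem_nhds (mem_connectedComponentIn hzT)
    obtain ⟨y, hy1, hy2⟩ := mem_closure_iff_nhds.mp hzc _ hzopen
    have he1 := connectedComponentIn_eq hy1
    have he2 := connectedComponentIn_eq (show y ∈ connectedComponentIn T b from hy2)
    exact hzV (by rw [hVdef, he2, ← he1]; exact mem_connectedComponentIn hzT)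
  -- closure points map into closure of U
  have hclmap : ∀ z ∈ closure V, z ∈ ball (0:ℂ) 1 → B z ∈ closure U := by
    intro z hzc hzb
    have hcw : ContinuousWithinAt B V z := (hBa z hzb).continuousAt.continuousWithinAt
    have h1 := hcw.mem_closure_image hzc
    have h2 : B '' V ⊆ U := by rintro w ⟨y, hyV, rfl⟩; exact (hVT hyV).2
    exact closure_mono h2 h1
  -- closure of V meets the unit sphere
  have hsph : ∃ z₁ ∈ closure V, ‖z₁‖ = 1 := by
    by_contra hcon
    push_neg at hcon
    have hclV : closure V ⊆ ball (0:ℂ) 1 := by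
      intro z hz
      have hz1 : ‖z‖ ≤ 1 := mem_closedBall_zero_iff.mp (hclVcb hz)
      exact mem_ball_zero_iff.mpr (lt_of_le_of_ne hz1 (hcon z hz))
    have hVne : V.Nonempty := ⟨b, hbV⟩
    have hFne : (closure V \ V).Nonempty := by
      by_contra hF
      rw [not_nonempty_iff_eq_empty, diff_eq_empty] at hF
      have hVclosed : IsClosed V := isClosed_of_closure_subset hF
      have hVuniv : V = univ :=
        (isClopen_iff.mp ⟨hVclosed, hVopen⟩).resolve_left (nonempty_iff_ne_empty.mp hVne)
      exact h1K (hVball (hVuniv ▸ mem_univ (1:ℂ)))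
    have hVa : AnalyticOnNhd ℂ B V := fun z hz => hBa z (hVball hz)
    rcases hVa.is_constant_or_isOpen hVconn with ⟨c, hc⟩ | hopen
    · obtain ⟨z, hzF⟩ := hFne
      have hzb : z ∈ ball (0:ℂ) 1 := hclV hzF.1
      have hca : c = a := by rw [← hBb]; exact (hc b hbV).symm
      have hcw : ContinuousWithinAt B V z := (hBa z hzb).continuousAt.continuousWithinAt
      have h1 := hcw.mem_closure_image hzF.1
      have h2 : B '' V ⊆ {c} := by rintro w ⟨y, hyV, rfl⟩; exact hc y hyV
      have h3 : B z = c := by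
        have := closure_mono h2 h1
        simpa using this
      exact hbd z hzF.1 hzF.2 hzb (by rw [h3, hca]; exact haU)
    · have hYopen : IsOpen (B '' V) := hopen V subset_rfl hVopen
      have hclVcomp : IsCompact (closure V) :=
        (isCompact_closedBall (0:ℂ) 1).of_isClosed_subset isClosed_closure hclVcb
      have hBclV : ContinuousOn B (closure V) :=
        fun z hz => (hBa z (hclV hz)).continuousAt.continuousWithinAt
      have himgcomp : IsCompact (B '' closure V) := hclVcomp.image_of_continuousOn hBclV
      have hYsub : closure (B '' V) ⊆ B '' closure V :=
        closure_minimal (image_mono subset_closure) himgcomp.isClosed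
      have hcover : U ⊆ (B '' V) ∪ (closure (B '' V))ᶜ := by
        intro u hu
        by_cases hY : u ∈ B '' V
        · exact Or.inl hY
        · refine Or.inr fun hucl => ?_
          obtain ⟨z, hzc, hzeq⟩ := hYsub hucl
          by_cases hzV : z ∈ V
          · exact hY ⟨z, hzV, hzeq⟩
          · exact hbd z hzc hzV (hclV hzc) (hzeq ▸ hu)
      have haY : a ∈ B '' V := ⟨b, hbV, hBb⟩
      have hUY : U ⊆ B '' V := by
        by_cases hne : (U ∩ (closure (B '' V))ᶜ).Nonempty
        · exfalso
          obtain ⟨x, hx⟩ := hUconn (B '' V) (closure (B '' V))ᶜ hYopen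
            isClosed_closure.isOpen_compl hcover ⟨a, haU, haY⟩ hne
          exact hx.2.2 (subset_closure hx.2.1)
        · intro u hu
          rcases hcover hu with h | h
          · exact h
          · exact absurd ⟨u, hu, h⟩ hne
      obtain ⟨R, hR⟩ := himgcomp.isBounded.subset_closedBall (0:ℂ)
      set w : ℂ := ((max R 1 + 1 : ℝ) : ℂ) with hwdef
      have hwnorm : ‖w‖ = max R 1 + 1 := by
        rw [hwdef, Complex.norm_real, Real.norm_eq_abs, abs_of_nonneg]
        have := le_max_right R 1; linarith
      have hw1 : w ∈ {z : ℂ | 1 ≤ ‖z‖} := by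
        simp only [mem_setOf_eq, hwnorm]
        have := le_max_right R 1; linarith
      have hwY := hYsub (subset_closure (hUY (houtU hw1)))
      have hwR := mem_closedBall_zero_iff.mp (hR hwY)
      rw [hwnorm] at hwR
      have := le_max_left R 1; linarith
  obtain ⟨z₁, hz₁c, hz₁n⟩ := hsph
  -- assemble the connected set
  have hz₁s : z₁ ∈ sphere (0:ℂ) 1 := mem_sphere_zero_iff_norm.mpr hz₁n
  have hrank : (1 : Cardinal) < Module.rank ℝ ℂ := by
    rw [Complex.rank_real_complex]; exact Cardinal.one_lt_two
  have hCpre : IsPreconnected (closure V ∪ sphere (0:ℂ) 1) :=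
    IsPreconnected.union z₁ hz₁c hz₁s hVconn.closure (isPreconnected_sphere hrank 0 1)
  have hsphS : sphere (0:ℂ) 1 ⊆
      closedBall (0:ℂ) 1 \ {z ∈ ball (0:ℂ) 1 | G z ∈ K} := by
    intro z hz
    have hzn : ‖z‖ = 1 := mem_sphere_zero_iff_norm.mp hz
    refine ⟨mem_closedBall_zero_iff.mpr (le_of_eq hzn), ?_⟩
    rintro ⟨hzb, -⟩
    have := mem_ball_zero_iff.mp hzb
    linarith
  have hclVS : closure V ⊆
      closedBall (0:ℂ) 1 \ {z ∈ ball (0:ℂ) 1 | G z ∈ K} := by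
    intro z hz
    refine ⟨hclVcb hz, ?_⟩
    rintro ⟨hzb, hzK⟩
    rw [hGBeq z (ball_subset_closedBall hzb)] at hzK
    have h2 : B z ∈ closure K'ᶜ := closure_mono hUK' (hclmap z hz hzb)
    rw [closure_compl] at h2
    exact h2 (hKint hzK)
  have hCS : closure V ∪ sphere (0:ℂ) 1 ⊆
      closedBall (0:ℂ) 1 \ {z ∈ ball (0:ℂ) 1 | G z ∈ K} :=
    union_subset hclVS hsphS
  have h1C : (1:ℂ) ∈ closure V ∪ sphere (0:ℂ) 1 := Or.inr (by simp)
  exact hCpre.subset_connectedComponentIn h1C hCS (Or.inl (subset_closure hbV))
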